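/- Along any solution (u₁, u₂) of system (5) on an open interval I, the function u₁u₂(u₁ + u₂) is constant. -/

import Mathlib

theorem system5_first_integral (a b : ℝ) (u₁ u₂ : ℝ → ℝ)
    (h₁ : ∀ t ∈ Set.Ioo a b, HasDerivAt u₁ (u₁ t * (u₁ t + 2 * u₂ t)) t)
    (h₂ : ∀ t ∈ Set.Ioo a b, HasDerivAt u₂ (-(u₂ t * (2 * u₁ t + u₂ t))) t) :
    ∀ s ∈ Set.Ioo a b, ∀ t ∈ Set.Ioo a b,
      u₁ s * u₂ s * (u₁ s + u₂ s) = u₁ t * u₂ t * (u₁ t + u₂ t) := by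
  set F : ℝ → ℝ := fun t => u₁ t * u₂ t * (u₁ t + u₂ t) with hF
  have hder : ∀ t ∈ Set.Ioo a b, HasDerivAt F 0 t := by
    intro t ht
    have h := (((h₁ t ht).mul (h₂ t ht)).mul ((h₁ t ht).add (h₂ t ht)))
    refine HasDerivAt.congr_deriv h ?_
    simp only [Pi.add_apply, Pi.mul_apply]; ring
  have key : ∀ x y, x ∈ Set.Ioo a b → y ∈ Set.Ioo a b → x ≤ y → F y = F x := by
    intro x y hx hy hxy
    have hsub : Set.Icc x y ⊆ Set.Ioo a b := Set.Icc_subset_Ioo hx.1 hy.2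
    have := constant_of_has_deriv_right_zero
      (f := F) (a := x) (b := y)
      (fun z hz => ((hder z (hsub hz)).continuousAt).continuousWithinAt)
      (fun z hz => ((hder z (hsub ⟨hz.1, le_of_lt hz.2⟩)).hasDerivWithinAt))
    exact this y (Set.right_mem_Icc.mpr hxy)
  intro s hs t ht
  rcases le_total s t with h | h
  · exact (key s t hs ht h).symm
  · exact key t s ht hs h
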